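/- arXiv:2004.12293 — 8 statements merged into one kernel-verified Lean document; each statement's English description precedes it below -/
import Mathlib

section
/- Let P be a probability measure on a measurable space Ω, let η : Ω → [0,1] be measurable, and let A_1, …, A_m be a finite measurable partition of Ω with P(A_l) > 0 for every l. Let p_l = (∫_{A_l} η dP)/P(A_l) and let η̄ : Ω → ℝ be the simple function equal to p_l on A_l. Then Σ_{l=1}^m P(A_l) · 2 p_l (1 − p_l) − ∫_Ω 2 η(x)(1 − η(x)) dP(x) = 2 ∫_Ω (η(x) − η̄(x))² dP(x); in particular the tree impurity Σ_{l=1}^m P(A_l) · 2 p_l (1 − p_l) is greater than or equal to the oracle impurity ∫_Ω 2 η(1 − η) dP. -/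
open MeasureTheory

/-- The excess of the tree impurity over the oracle impurity equals twice the integral of
the squared deviation between `η` and its leaf-wise conditional mean `η̄`; in particular the
tree impurity dominates the oracle impurity. -/
theorem stmt0 {Ω : Type*} [MeasurableSpace Ω] (P : Measure Ω) [IsProbabilityMeasure P]
    (η : Ω → ℝ) (hη : Measurable η) (hη01 : ∀ x, η x ∈ Set.Icc (0 : ℝ) 1)
    (m : ℕ) (A : Fin m → Set Ω) (hA : ∀ l, MeasurableSet (A l))
    (hdisj : Pairwise (Function.onFun Disjoint A)) (hcover : (⋃ l, A l) = Set.univ)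
    (hpos : ∀ l, 0 < P (A l))
    (p : Fin m → ℝ) (hp : ∀ l, p l = (∫ x in A l, η x ∂P) / (P (A l)).toReal)
    (ηbar : Ω → ℝ) (hηbar : ∀ l, ∀ x ∈ A l, ηbar x = p l) :
    (∑ l, (P (A l)).toReal * (2 * p l * (1 - p l))) - (∫ x, 2 * η x * (1 - η x) ∂P)
        = 2 * ∫ x, (η x - ηbar x) ^ 2 ∂P ∧
    (∫ x, 2 * η x * (1 - η x) ∂P) ≤ ∑ l, (P (A l)).toReal * (2 * p l * (1 - p l)) := by
  -- notation
  set c : Fin m → ℝ := fun l => (P (A l)).toReal with hc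
  have hcpos : ∀ l, 0 < c l := fun l =>
    ENNReal.toReal_pos (hpos l).ne' (measure_ne_top P _)
  -- integrability facts
  have hηint : Integrable η P := by
    apply (integrable_const (1 : ℝ)).mono' hη.aestronglyMeasurable
    filter_upwards with x
    rw [Real.norm_eq_abs, abs_le]
    exact ⟨le_trans (by norm_num) (hη01 x).1, (hη01 x).2⟩
  have hη2int : Integrable (fun x => η x ^ 2) P := by
    apply (integrable_const (1 : ℝ)).mono' (hη.pow_const 2).aestronglyMeasurable
    filter_upwards with x
    rw [Real.norm_eq_abs, abs_le]
    constructor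
    · nlinarith [(hη01 x).1]
    · nlinarith [(hη01 x).1, (hη01 x).2]
  -- p l * c l = ∫ over A l
  have hpc : ∀ l, c l * p l = ∫ x in A l, η x ∂P := by
    intro l
    rw [hp l, mul_div_cancel₀ _ (hcpos l).ne']
  -- ηbar as a measurable simple function
  have hηbar' : ηbar = fun x => ∑ l, (A l).indicator (fun _ => p l) x := by
    funext x
    have hx : x ∈ ⋃ l, A l := hcover ▸ Set.mem_univ x
    obtain ⟨l, hl⟩ := Set.mem_iUnion.mp hx
    rw [Finset.sum_eq_single l]
    · rw [Set.indicator_of_mem hl, hηbar l x hl]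
    · intro l' _ hl'
      apply Set.indicator_of_notMem
      intro hxl'
      exact Set.disjoint_left.mp (hdisj hl'.symm) hl hxl'
    · intro h; exact absurd (Finset.mem_univ l) h
  have hηbarm : Measurable ηbar := by
    rw [hηbar']
    exact Finset.measurable_sum _ fun l _ => (measurable_const.indicator (hA l))
  have hηbarbd : ∀ x, |ηbar x| ≤ 1 := by
    intro x
    have hx : x ∈ ⋃ l, A l := hcover ▸ Set.mem_univ x
    obtain ⟨l, hl⟩ := Set.mem_iUnion.mp hx
    rw [hηbar l x hl, hp l, abs_div, abs_of_nonneg (ENNReal.toReal_nonneg), div_le_one (hcpos l)]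
    have h0 : 0 ≤ ∫ x in A l, η x ∂P :=
      setIntegral_nonneg (hA l) fun x _ => (hη01 x).1
    rw [abs_of_nonneg h0]
    calc ∫ x in A l, η x ∂P ≤ ∫ _ in A l, (1 : ℝ) ∂P := by
          apply setIntegral_mono_on hηint.integrableOn ((integrableOn_const_iff).mpr (Or.inr ?_))
            (hA l) fun x _ => (hη01 x).2
          exact lt_of_le_of_lt prob_le_one ENNReal.one_lt_top
      _ = c l := by simp [hc, measureReal_def]
  have hsqint : Integrable (fun x => (η x - ηbar x) ^ 2) P := by
    apply (integrable_const (4 : ℝ)).mono'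
      (((hη.sub hηbarm).pow_const 2).aestronglyMeasurable)
    filter_upwards with x
    rw [Real.norm_eq_abs, abs_le]
    have h1 : |η x| ≤ 1 := by
      rw [abs_le]; exact ⟨le_trans (by norm_num) (hη01 x).1, (hη01 x).2⟩
    have h2 := hηbarbd x
    constructor
    · nlinarith [sq_nonneg (η x - ηbar x)]
    · show (η x - ηbar x) ^ 2 ≤ 4; nlinarith [abs_le.mp h1, abs_le.mp h2, sq_nonneg (η x + ηbar x)]
  -- splitting an integral over the partition
  have hsplit : ∀ f : Ω → ℝ, Integrable f P →
      ∫ x, f x ∂P = ∑ l, ∫ x in A l, f x ∂P := by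
    intro f hf
    rw [← setIntegral_univ, ← hcover]
    exact integral_iUnion_fintype hA hdisj fun l => hf.integrableOn
  -- key per-piece identity
  have hpiece : ∀ l, ∫ x in A l, (η x - ηbar x) ^ 2 ∂P
      = (∫ x in A l, η x ^ 2 ∂P) - c l * p l ^ 2 := by
    intro l
    have hcongr : ∫ x in A l, (η x - ηbar x) ^ 2 ∂P
        = ∫ x in A l, (η x ^ 2 - 2 * p l * η x + p l ^ 2) ∂P := by
      apply setIntegral_congr_fun (hA l)
      intro x hx
      dsimp only
      rw [hηbar l x hx]; ring
    have h1 : IntegrableOn (fun x => η x ^ 2 - 2 * p l * η x) (A l) P :=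
      hη2int.integrableOn.sub (hηint.integrableOn.const_mul (2 * p l))
    rw [hcongr]
    rw [integral_add h1 (integrable_const _),
      integral_sub hη2int.integrableOn (hηint.integrableOn.const_mul (2 * p l)),
      integral_const_mul, setIntegral_const, ← hpc l]
    have hcl : P.real (A l) = c l := rfl
    rw [hcl, smul_eq_mul]; ring
  have hS : ∑ l, c l * p l = ∫ x, η x ∂P := by
    rw [hsplit η hηint]
    exact Finset.sum_congr rfl fun l _ => hpc l
  have hS2 : ∫ x, η x ^ 2 ∂P = ∑ l, ∫ x in A l, η x ^ 2 ∂P :=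
    hsplit _ hη2int
  have horacle : ∫ x, 2 * η x * (1 - η x) ∂P
      = 2 * (∫ x, η x ∂P) - 2 * ∫ x, η x ^ 2 ∂P := by
    have : ∫ x, 2 * η x * (1 - η x) ∂P
        = ∫ x, (2 * η x - 2 * η x ^ 2) ∂P := by
      apply integral_congr_ae; filter_upwards with x; ring
    rw [this, integral_sub (hηint.const_mul 2) (hη2int.const_mul 2),
      integral_const_mul, integral_const_mul]
  have hmain : (∑ l, c l * (2 * p l * (1 - p l))) - (∫ x, 2 * η x * (1 - η x) ∂P)
      = 2 * ∫ x, (η x - ηbar x) ^ 2 ∂P := by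
    have hlhs : ∑ l, c l * (2 * p l * (1 - p l))
        = 2 * (∑ l, c l * p l) - 2 * ∑ l, c l * p l ^ 2 := by
      rw [Finset.mul_sum, Finset.mul_sum, ← Finset.sum_sub_distrib]
      exact Finset.sum_congr rfl fun l _ => by ring
    have hrhs : ∫ x, (η x - ηbar x) ^ 2 ∂P
        = (∫ x, η x ^ 2 ∂P) - ∑ l, c l * p l ^ 2 := by
      rw [hsplit _ hsqint, hS2, ← Finset.sum_sub_distrib]
      exact Finset.sum_congr rfl fun l _ => hpiece l
    rw [hlhs, horacle, hS, hrhs]; ring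
  refine ⟨hmain, ?_⟩
  have hnn : 0 ≤ ∫ x, (η x - ηbar x) ^ 2 ∂P :=
    integral_nonneg fun x => sq_nonneg _
  linarith [hmain]
end

section
/- Let m ∈ ℕ and ε ∈ (0,1). For each j ∈ {1,…,m} let p_j, q_j ∈ [0,1] with |p_j − q_j| ≤ ε, let w_j, v_j ∈ [0,1] with |w_j − v_j| ≤ ε, and let ℓ_j ∈ {0,1}. Define σ_j = 2 p_j (1 − p_j) if (ℓ_j = 1 ⟺ p_j ≥ 1/2) and σ_j = 1 − 2 p_j (1 − p_j) otherwise; define τ_j the same way with q_j in place of p_j. Then |Σ_{j=1}^m w_j σ_j − Σ_{j=1}^m v_j τ_j| ≤ (3 + 2ε) m ε. -/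
lemma sigma_mem (x : ℝ) (hx : x ∈ Set.Icc (0:ℝ) 1) (b : Prop) [Decidable b] :
    (if b then 2 * x * (1 - x) else 1 - 2 * x * (1 - x)) ∈ Set.Icc (0:ℝ) 1 := by
  obtain ⟨h0, h1⟩ := hx
  split <;> constructor <;> nlinarith [sq_nonneg (x - 1/2)]

lemma term_bound (ε pj qj : ℝ) (hε : ε ∈ Set.Ioo (0 : ℝ) 1)
    (hp : pj ∈ Set.Icc (0:ℝ) 1) (hq : qj ∈ Set.Icc (0:ℝ) 1)
    (hpq : |pj - qj| ≤ ε) (b : Bool) :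
    |(if b = true ↔ 1 / 2 ≤ pj then 2 * pj * (1 - pj) else 1 - 2 * pj * (1 - pj)) -
      (if b = true ↔ 1 / 2 ≤ qj then 2 * qj * (1 - qj) else 1 - 2 * qj * (1 - qj))| ≤
      2 * ε + 2 * ε ^ 2 := by
  obtain ⟨hε0, hε1⟩ := hε
  obtain ⟨hp0, hp1⟩ := hp
  obtain ⟨hq0, hq1⟩ := hq
  rw [abs_le] at hpq ⊢
  by_cases h1 : b = true ↔ 1 / 2 ≤ pj <;> by_cases h2 : b = true ↔ 1 / 2 ≤ qj
  · rw [if_pos h1, if_pos h2]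
    constructor <;> nlinarith
  · rw [if_pos h1, if_neg h2]
    have hx : (1/2 ≤ pj) ↔ ¬ (1/2 ≤ qj) := by tauto
    have hpe : |pj - 1/2| ≤ ε ∧ |qj - 1/2| ≤ ε := by
      rcases le_or_gt (1/2) pj with hc | hc
      · have := hx.mp hc; rw [abs_le, abs_le]; constructor <;> constructor <;> linarith
      · have : 1/2 ≤ qj := by by_contra hn; exact absurd hc (not_lt.mpr (hx.mpr hn))
        rw [abs_le, abs_le]; constructor <;> constructor <;> linarith
    simp only [abs_le] at hpe
    obtain ⟨⟨a1, a2⟩, b1, b2⟩ := hpe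
    constructor <;> nlinarith [sq_nonneg (pj - 1/2), sq_nonneg (qj - 1/2)]
  · rw [if_neg h1, if_pos h2]
    have hx : (1/2 ≤ qj) ↔ ¬ (1/2 ≤ pj) := by tauto
    have hpe : |pj - 1/2| ≤ ε ∧ |qj - 1/2| ≤ ε := by
      rcases le_or_gt (1/2) pj with hc | hc
      · have : ¬ (1/2 ≤ qj) := fun hb => (hx.mp hb) hc
        push_neg at this
        rw [abs_le, abs_le]; constructor <;> constructor <;> linarith
      · have := hx.mpr (not_le.mpr hc)
        rw [abs_le, abs_le]; constructor <;> constructor <;> linarith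
    simp only [abs_le] at hpe
    obtain ⟨⟨a1, a2⟩, b1, b2⟩ := hpe
    constructor <;> nlinarith [sq_nonneg (pj - 1/2), sq_nonneg (qj - 1/2)]
  · rw [if_neg h1, if_neg h2]
    constructor <;> nlinarith

/-- Deterministic core of Lemma 3: the signed tree impurities computed from two nearby sets of
leaf probabilities and weights, with the same class label assignment, differ by at most
`(3 + 2ε) m ε`. -/
theorem stmt3 (m : ℕ) (ε : ℝ) (hε : ε ∈ Set.Ioo (0 : ℝ) 1)
    (p q w v : Fin m → ℝ) (ℓ : Fin m → Bool)
    (hp : ∀ j, p j ∈ Set.Icc (0 : ℝ) 1) (hq : ∀ j, q j ∈ Set.Icc (0 : ℝ) 1)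
    (hpq : ∀ j, |p j - q j| ≤ ε)
    (hw : ∀ j, w j ∈ Set.Icc (0 : ℝ) 1) (hv : ∀ j, v j ∈ Set.Icc (0 : ℝ) 1)
    (hwv : ∀ j, |w j - v j| ≤ ε)
    (σ τ : Fin m → ℝ)
    (hσ : ∀ j, σ j =
      if ℓ j = true ↔ 1 / 2 ≤ p j then 2 * p j * (1 - p j) else 1 - 2 * p j * (1 - p j))
    (hτ : ∀ j, τ j =
      if ℓ j = true ↔ 1 / 2 ≤ q j then 2 * q j * (1 - q j) else 1 - 2 * q j * (1 - q j)) :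
    |∑ j, w j * σ j - ∑ j, v j * τ j| ≤ (3 + 2 * ε) * m * ε := by
  obtain ⟨hε0, hε1⟩ := hε
  have hterm : ∀ j, |w j * σ j - v j * τ j| ≤ (3 + 2 * ε) * ε := by
    intro j
    have hσj : σ j ∈ Set.Icc (0:ℝ) 1 := by rw [hσ j]; exact sigma_mem _ (hp j) _
    have hτj : τ j ∈ Set.Icc (0:ℝ) 1 := by rw [hτ j]; exact sigma_mem _ (hq j) _
    have key : |σ j - τ j| ≤ 2 * ε + 2 * ε ^ 2 := by
      rw [hσ j, hτ j]
      exact term_bound ε (p j) (q j) ⟨hε0, hε1⟩ (hp j) (hq j) (hpq j) (ℓ j)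
    have : w j * σ j - v j * τ j = w j * (σ j - τ j) + (w j - v j) * τ j := by ring
    rw [this]
    have hw1 : |w j| ≤ 1 := abs_le.mpr ⟨by linarith [(hw j).1], (hw j).2⟩
    have hτ1 : |τ j| ≤ 1 := abs_le.mpr ⟨by linarith [hτj.1], hτj.2⟩
    calc |w j * (σ j - τ j) + (w j - v j) * τ j|
        ≤ |w j * (σ j - τ j)| + |(w j - v j) * τ j| := abs_add_le _ _
      _ ≤ (3 + 2 * ε) * ε := by
          rw [abs_mul, abs_mul]
          nlinarith [mul_le_mul hw1 key (abs_nonneg _) zero_le_one,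
            mul_le_mul (hwv j) hτ1 (abs_nonneg _) hε0.le]
  calc |∑ j, w j * σ j - ∑ j, v j * τ j|
      = |∑ j, (w j * σ j - v j * τ j)| := by rw [Finset.sum_sub_distrib]
    _ ≤ ∑ j, |w j * σ j - v j * τ j| := Finset.abs_sum_le_sum_abs _ _
    _ ≤ ∑ _j : Fin m, (3 + 2 * ε) * ε := Finset.sum_le_sum (fun j _ => hterm j)
    _ = (3 + 2 * ε) * m * ε := by
        rw [Finset.sum_const, Finset.card_univ, Fintype.card_fin]; push_cast; ring
end

section
/- Let P be a probability measure on a measurable space Ω, let η : Ω → [0,1] be measurable, let ε ≥ 0, and let {A_1,…,A_k} and {A′_1,…,A′_k} be two finite measurable partitions of Ω with P(A_j) > 0, P(A′_j) > 0, and P(A_j △ A′_j) ≤ ε for every j. With p_j = (∫_{A_j} η dP)/P(A_j) and p′_j = (∫_{A′_j} η dP)/P(A′_j), it holds that |Σ_{j=1}^k P(A_j) · 2 p_j (1 − p_j) − Σ_{j=1}^k P(A′_j) · 2 p′_j (1 − p′_j)| ≤ 5 k ε. -/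
open MeasureTheory

lemma gini_close {a a' I I' ε : ℝ} (ha : 0 < a) (ha' : 0 < a')
    (hI0 : 0 ≤ I) (hIa : I ≤ a) (hI0' : 0 ≤ I') (hIa' : I' ≤ a')
    (hε : 0 ≤ ε) (h1 : |a - a'| ≤ ε) (h2 : |I - I'| ≤ ε) :
    |a * (2 * (I / a) * (1 - I / a)) - a' * (2 * (I' / a') * (1 - I' / a'))| ≤ 5 * ε := by
  set q := I / a with hq
  set q' := I' / a' with hq'
  have hq0 : 0 ≤ q := div_nonneg hI0 ha.le
  have hq1 : q ≤ 1 := (div_le_one ha).mpr hIa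
  have hq0' : 0 ≤ q' := div_nonneg hI0' ha'.le
  have hq1' : q' ≤ 1 := (div_le_one ha').mpr hIa'
  have haq : a * q = I := by rw [hq]; field_simp
  have haq' : a' * q' = I' := by rw [hq']; field_simp
  have expand : a * (2 * q * (1 - q)) - a' * (2 * q' * (1 - q')) =
      (a - a') * (2 * q * (1 - q)) + 2 * ((a' - a) * q + (I - I')) * (1 - (q + q')) := by
    rw [← haq, ← haq']; ring
  rw [expand]
  have hg : |2 * q * (1 - q)| ≤ 1 / 2 := by
    rw [abs_le]; constructor <;> nlinarith [sq_nonneg (2 * q - 1)]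
  have ht : |1 - (q + q')| ≤ 1 := by rw [abs_le]; constructor <;> linarith
  have hs : |(a' - a) * q + (I - I')| ≤ 2 * ε := by
    calc |(a' - a) * q + (I - I')| ≤ |(a' - a) * q| + |I - I'| := abs_add_le _ _
      _ ≤ ε * 1 + ε := by
          rw [abs_mul, abs_sub_comm a' a, abs_of_nonneg hq0]
          have := mul_le_mul h1 hq1 hq0 hε
          linarith
      _ = 2 * ε := by ring
  have t1 : |(a - a') * (2 * q * (1 - q))| ≤ ε * (1 / 2) := by
    rw [abs_mul]; exact mul_le_mul h1 hg (abs_nonneg _) hε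
  have t2 : |2 * ((a' - a) * q + (I - I')) * (1 - (q + q'))| ≤ 2 * (2 * ε) * 1 := by
    rw [abs_mul, abs_mul, abs_two]
    have : (0:ℝ) ≤ 2 * ε := by linarith
    exact mul_le_mul (mul_le_mul le_rfl hs (abs_nonneg _) (by norm_num)) ht (abs_nonneg _)
      (by positivity)
  calc |(a - a') * (2 * q * (1 - q)) + 2 * ((a' - a) * q + (I - I')) * (1 - (q + q'))|
      ≤ |(a - a') * (2 * q * (1 - q))| + |2 * ((a' - a) * q + (I - I')) * (1 - (q + q'))| :=
        abs_add_le _ _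
    _ ≤ 5 * ε := by linarith

open MeasureTheory in
lemma per_term {Ω : Type*} [MeasurableSpace Ω] (P : Measure Ω) [IsProbabilityMeasure P]
    (η : Ω → ℝ) (hη : Measurable η) (hη01 : ∀ x, η x ∈ Set.Icc (0 : ℝ) 1)
    {S T : Set Ω} (hS : MeasurableSet S) (hT : MeasurableSet T)
    (hposS : 0 < P S) (hposT : 0 < P T) {ε : ℝ} (hε : 0 ≤ ε)
    (hclose : P (symmDiff S T) ≤ ENNReal.ofReal ε) :
    |(P S).toReal * (2 * ((∫ x in S, η x ∂P) / (P S).toReal) * (1 - (∫ x in S, η x ∂P) / (P S).toReal))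
      - (P T).toReal * (2 * ((∫ x in T, η x ∂P) / (P T).toReal) * (1 - (∫ x in T, η x ∂P) / (P T).toReal))|
      ≤ 5 * ε := by
  have hint : Integrable η P := by
    refine Integrable.mono' (integrable_const 1) hη.aestronglyMeasurable ?_
    filter_upwards with x
    have h := hη01 x
    rw [Real.norm_eq_abs, abs_le]
    exact ⟨by linarith [h.1], h.2⟩
  have hfin : ∀ U : Set Ω, P U ≠ ⊤ := fun U => measure_ne_top P U
  have h01 : ∀ x, ‖η x‖ ≤ 1 := fun x => by
    have h := hη01 x; rw [Real.norm_eq_abs, abs_le]; exact ⟨by linarith [h.1], h.2⟩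
  have intnn : ∀ U : Set Ω, MeasurableSet U → 0 ≤ ∫ x in U, η x ∂P := fun U hU =>
    setIntegral_nonneg hU fun x _ => (hη01 x).1
  have intle : ∀ U : Set Ω, ∫ x in U, η x ∂P ≤ (P U).toReal := fun U => by
    have := norm_setIntegral_le_of_norm_le_const (μ := P) (s := U) (f := η)
      (measure_lt_top P U) (fun x _ => h01 x)
    calc ∫ x in U, η x ∂P ≤ ‖∫ x in U, η x ∂P‖ := le_abs_self _
      _ ≤ 1 * (P U).toReal := this
      _ = (P U).toReal := one_mul _
  -- symmdiff pieces
  have hsub1 : S \ T ⊆ symmDiff S T := by rw [Set.symmDiff_def]; exact Set.subset_union_left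
  have hsub2 : T \ S ⊆ symmDiff S T := by rw [Set.symmDiff_def]; exact Set.subset_union_right
  have hm1 : (P (S \ T)).toReal ≤ ε :=
    ENNReal.toReal_le_of_le_ofReal hε ((measure_mono hsub1).trans hclose)
  have hm2 : (P (T \ S)).toReal ≤ ε :=
    ENNReal.toReal_le_of_le_ofReal hε ((measure_mono hsub2).trans hclose)
  -- split measures
  have splitS : (P S).toReal = (P (S ∩ T)).toReal + (P (S \ T)).toReal := by
    rw [← ENNReal.toReal_add (hfin _) (hfin _), measure_inter_add_diff S hT]
  have splitT : (P T).toReal = (P (S ∩ T)).toReal + (P (T \ S)).toReal := by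
    rw [← ENNReal.toReal_add (hfin _) (hfin _), Set.inter_comm, measure_inter_add_diff T hS]
  have hmeas_diff : |(P S).toReal - (P T).toReal| ≤ ε := by
    rw [splitS, splitT, abs_le]
    constructor <;> [linarith [ENNReal.toReal_nonneg (a := P (S \ T))];
      linarith [ENNReal.toReal_nonneg (a := P (T \ S))]]
  -- split integrals
  have d1 : Disjoint (S ∩ T) (S \ T) :=
    disjoint_sdiff_self_right.mono_left Set.inter_subset_right
  have d2 : Disjoint (S ∩ T) (T \ S) :=
    disjoint_sdiff_self_right.mono_left Set.inter_subset_left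
  have splitIS : ∫ x in S, η x ∂P = (∫ x in S ∩ T, η x ∂P) + ∫ x in S \ T, η x ∂P := by
    rw [← setIntegral_union d1 (hS.diff hT) hint.integrableOn hint.integrableOn,
      Set.inter_union_diff]
  have splitIT : ∫ x in T, η x ∂P = (∫ x in S ∩ T, η x ∂P) + ∫ x in T \ S, η x ∂P := by
    rw [← setIntegral_union d2 (hT.diff hS) hint.integrableOn hint.integrableOn,
      Set.inter_comm, Set.inter_union_diff]
  have hint_diff : |(∫ x in S, η x ∂P) - ∫ x in T, η x ∂P| ≤ ε := by
    rw [splitIS, splitIT, abs_le]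
    have b1 := intnn _ (hS.diff hT)
    have b2 := intnn _ (hT.diff hS)
    have c1 := (intle (S \ T)).trans hm1
    have c2 := (intle (T \ S)).trans hm2
    constructor <;> linarith
  exact gini_close (ENNReal.toReal_pos hposS.ne' (hfin S)) (ENNReal.toReal_pos hposT.ne' (hfin T))
    (intnn S hS) (intle S) (intnn T hT) (intle T) hε hmeas_diff hint_diff


/-- Technical Lemma 2: two trees (finite measurable partitions) whose corresponding leaf
nodes differ by at most `ε` in probability have tree impurities differing by at most `5kε`. -/
theorem stmt4 {Ω : Type*} [MeasurableSpace Ω] (P : Measure Ω) [IsProbabilityMeasure P]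
    (η : Ω → ℝ) (hη : Measurable η) (hη01 : ∀ x, η x ∈ Set.Icc (0 : ℝ) 1)
    (k : ℕ) (A A' : Fin k → Set Ω)
    (hA : ∀ j, MeasurableSet (A j)) (hA' : ∀ j, MeasurableSet (A' j))
    (hdisj : Pairwise (Function.onFun Disjoint A)) (hcover : (⋃ j, A j) = Set.univ)
    (hdisj' : Pairwise (Function.onFun Disjoint A')) (hcover' : (⋃ j, A' j) = Set.univ)
    (hpos : ∀ j, 0 < P (A j)) (hpos' : ∀ j, 0 < P (A' j))
    (ε : ℝ) (hε : 0 ≤ ε)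
    (hclose : ∀ j, P (symmDiff (A j) (A' j)) ≤ ENNReal.ofReal ε)
    (p p' : Fin k → ℝ)
    (hp : ∀ j, p j = (∫ x in A j, η x ∂P) / (P (A j)).toReal)
    (hp' : ∀ j, p' j = (∫ x in A' j, η x ∂P) / (P (A' j)).toReal) :
    |∑ j, (P (A j)).toReal * (2 * p j * (1 - p j))
        - ∑ j, (P (A' j)).toReal * (2 * p' j * (1 - p' j))| ≤ 5 * k * ε := by
  rw [← Finset.sum_sub_distrib]
  calc |∑ j, ((P (A j)).toReal * (2 * p j * (1 - p j))
          - (P (A' j)).toReal * (2 * p' j * (1 - p' j)))|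
      ≤ ∑ j, |(P (A j)).toReal * (2 * p j * (1 - p j))
          - (P (A' j)).toReal * (2 * p' j * (1 - p' j))| := Finset.abs_sum_le_sum_abs _ _
    _ ≤ ∑ _j : Fin k, 5 * ε := by
        refine Finset.sum_le_sum fun j _ => ?_
        rw [hp j, hp' j]
        exact per_term P η hη hη01 (hA j) (hA' j) (hpos j) (hpos' j) hε (hclose j)
    _ = 5 * k * ε := by
        rw [Finset.sum_const, Finset.card_univ, Fintype.card_fin, nsmul_eq_mul]; ring
end

section
/- Let P be a probability measure on a measurable space Ω, let η : Ω → [0,1] be measurable, let ε ≥ 0, and let {A_1,…,A_m} be a finite measurable partition of Ω with P(A_l) > 0 for each l. Let p_l = (∫_{A_l} η dP)/P(A_l), and suppose that for every l and every x ∈ A_l, |η(x) − p_l| ≤ ε. Then |Σ_{l=1}^m P(A_l) · 2 p_l (1 − p_l) − ∫_Ω 2 η(1 − η) dP| ≤ 2ε. -/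
open MeasureTheory

/-- Step 2 of Technical Lemma 1: if `η` is within `ε` of its leaf-wise conditional mean on
every leaf, then the tree impurity is within `2ε` of the oracle impurity. -/
theorem stmt11 {Ω : Type*} [MeasurableSpace Ω] (P : Measure Ω) [IsProbabilityMeasure P]
    (η : Ω → ℝ) (hη : Measurable η) (hη01 : ∀ x, η x ∈ Set.Icc (0 : ℝ) 1)
    (ε : ℝ) (hε : 0 ≤ ε)
    (m : ℕ) (A : Fin m → Set Ω) (hA : ∀ l, MeasurableSet (A l))
    (hdisj : Pairwise (Function.onFun Disjoint A)) (hcover : (⋃ l, A l) = Set.univ)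
    (hpos : ∀ l, 0 < P (A l))
    (p : Fin m → ℝ) (hp : ∀ l, p l = (∫ x in A l, η x ∂P) / (P (A l)).toReal)
    (hvar : ∀ l, ∀ x ∈ A l, |η x - p l| ≤ ε) :
    |(∑ l, (P (A l)).toReal * (2 * p l * (1 - p l))) - ∫ x, 2 * η x * (1 - η x) ∂P|
      ≤ 2 * ε := by
  have hfin : ∀ l, P (A l) ≠ ⊤ := fun l => measure_ne_top P (A l)
  have hμpos : ∀ l, 0 < (P (A l)).toReal := fun l =>
    ENNReal.toReal_pos (hpos l).ne' (hfin l)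
  -- integrability
  have hηint : Integrable η P := by
    refine Integrable.mono' (integrable_const 1) hη.aestronglyMeasurable ?_
    filter_upwards with x
    have h := hη01 x
    rw [Real.norm_eq_abs, abs_le]
    exact ⟨by linarith [h.1], h.2⟩
  have hη2int : Integrable (fun x => η x ^ 2) P := by
    refine Integrable.mono' (integrable_const 1) (hη.pow_const 2).aestronglyMeasurable ?_
    filter_upwards with x
    have h := hη01 x
    rw [Real.norm_eq_abs, abs_le]
    constructor <;> nlinarith [h.1, h.2]
  have hfint : Integrable (fun x => 2 * η x * (1 - η x)) P := by
    refine ((hηint.const_mul 2).sub (hη2int.const_mul 2)).congr ?_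
    filter_upwards with x; simp only [Pi.sub_apply]; ring
  have hsqint : ∀ l, Integrable (fun x => 2 * (p l - η x) ^ 2) P := by
    intro l
    refine (((integrable_const (2 * (p l) ^ 2)).sub (hηint.const_mul (4 * p l))).add
      (hη2int.const_mul 2)).congr ?_
    filter_upwards with x; simp only [Pi.sub_apply, Pi.add_apply]; ring
  -- I1 and I2
  set I1 : Fin m → ℝ := fun l => ∫ x in A l, η x ∂P with hI1
  set I2 : Fin m → ℝ := fun l => ∫ x in A l, η x ^ 2 ∂P with hI2
  have hI1eq : ∀ l, I1 l = p l * (P (A l)).toReal := by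
    intro l
    rw [hp l, div_mul_cancel₀ _ (hμpos l).ne']
  -- leaf identity
  have hleaf : ∀ l, (P (A l)).toReal * (2 * p l * (1 - p l)) -
      ∫ x in A l, 2 * η x * (1 - η x) ∂P = ∫ x in A l, 2 * (p l - η x) ^ 2 ∂P := by
    intro l
    have e1 : ∫ x in A l, 2 * η x * (1 - η x) ∂P = 2 * I1 l - 2 * I2 l := by
      have h : ∀ x, 2 * η x * (1 - η x) = 2 * η x - 2 * η x ^ 2 := fun x => by ring
      simp_rw [h]
      rw [integral_sub ((hηint.integrableOn).const_mul 2)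
        ((hη2int.integrableOn).const_mul 2), integral_const_mul, integral_const_mul]
    have e2 : ∫ x in A l, 2 * (p l - η x) ^ 2 ∂P
        = 2 * (p l) ^ 2 * (P (A l)).toReal - 4 * p l * I1 l + 2 * I2 l := by
      have h : ∀ x, 2 * (p l - η x) ^ 2
          = 2 * (p l) ^ 2 - 4 * p l * η x + 2 * η x ^ 2 := fun x => by ring
      simp_rw [h]
      have hf : Integrable (fun x => 2 * p l ^ 2 - 4 * p l * η x) (P.restrict (A l)) := by
        refine ((integrable_const (2 * p l ^ 2)).sub
          ((hηint.integrableOn).const_mul (4 * p l))).congr ?_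
        filter_upwards with x; simp only [Pi.sub_apply]
      rw [integral_add hf ((hη2int.integrableOn).const_mul 2),
        integral_sub (integrable_const _) ((hηint.integrableOn).const_mul (4 * p l)),
        integral_const, integral_const_mul, integral_const_mul]
      simp [smul_eq_mul, measureReal_def]
      ring
    rw [e1, e2, hI1eq l]
    ring
  -- leaf bound
  have hbound : ∀ l, ∫ x in A l, 2 * (p l - η x) ^ 2 ∂P ≤ 2 * ε * (P (A l)).toReal := by
    intro l
    have hp01 : p l ∈ Set.Icc (0 : ℝ) 1 := by
      have h0 : 0 ≤ I1 l := setIntegral_nonneg (hA l) (fun x _ => (hη01 x).1)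
      have h1 : I1 l ≤ (P (A l)).toReal := by
        have := setIntegral_mono_on hηint.integrableOn
          (integrable_const 1).integrableOn (hA l) (fun x _ => (hη01 x).2)
        simpa [smul_eq_mul, measureReal_def] using this
      rw [hp l]
      constructor
      · positivity
      · rw [div_le_one (hμpos l)]; exact h1
    obtain ⟨hpa, hpb⟩ := hp01
    have hptw : ∀ x ∈ A l, 2 * (p l - η x) ^ 2 ≤ 2 * ε := by
      intro x hx
      have h1 := hvar l x hx
      obtain ⟨ha, hb⟩ := hη01 x
      have h2 : |p l - η x| ≤ 1 := by
        rw [abs_le]; constructor <;> linarith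
      have h3 : (p l - η x) ^ 2 ≤ ε * 1 := by
        rw [← abs_sub_comm] at h1
        calc (p l - η x) ^ 2 = |p l - η x| * |p l - η x| := by rw [← sq_abs, sq]
          _ ≤ ε * 1 := mul_le_mul h1 h2 (abs_nonneg _) hε
      linarith
    calc ∫ x in A l, 2 * (p l - η x) ^ 2 ∂P ≤ ∫ _ in A l, 2 * ε ∂P :=
          setIntegral_mono_on (hsqint l).integrableOn
            (integrable_const _).integrableOn (hA l) hptw
      _ = 2 * ε * (P (A l)).toReal := by
          rw [setIntegral_const, smul_eq_mul, measureReal_def]; ring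
  have hnonneg : ∀ l, 0 ≤ ∫ x in A l, 2 * (p l - η x) ^ 2 ∂P := fun l =>
    setIntegral_nonneg (hA l) (fun x _ => by positivity)
  -- decompose total integral
  have hsplit : ∫ x, 2 * η x * (1 - η x) ∂P
      = ∑ l, ∫ x in A l, 2 * η x * (1 - η x) ∂P := by
    rw [← setIntegral_univ, ← hcover,
      integral_iUnion hA hdisj hfint.integrableOn, tsum_fintype]
  have hmeas1 : ∑ l, (P (A l)).toReal = 1 := by
    have h : ∑ l, P (A l) = 1 := by
      rw [← tsum_fintype (L := .unconditional _), ← measure_iUnion hdisj hA, hcover, measure_univ]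
    rw [← ENNReal.toReal_sum (fun l _ => hfin l), h, ENNReal.toReal_one]
  rw [hsplit, ← Finset.sum_sub_distrib]
  have habs : |∑ l, ((P (A l)).toReal * (2 * p l * (1 - p l))
      - ∫ x in A l, 2 * η x * (1 - η x) ∂P)|
      = ∑ l, ((P (A l)).toReal * (2 * p l * (1 - p l))
      - ∫ x in A l, 2 * η x * (1 - η x) ∂P) := by
    rw [abs_of_nonneg]
    refine Finset.sum_nonneg fun l _ => ?_
    rw [hleaf l]
    exact hnonneg l
  rw [habs]
  calc ∑ l, ((P (A l)).toReal * (2 * p l * (1 - p l))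
        - ∫ x in A l, 2 * η x * (1 - η x) ∂P)
      = ∑ l, ∫ x in A l, 2 * (p l - η x) ^ 2 ∂P :=
        Finset.sum_congr rfl fun l _ => hleaf l
    _ ≤ ∑ l, 2 * ε * (P (A l)).toReal := Finset.sum_le_sum fun l _ => hbound l
    _ = 2 * ε := by rw [← Finset.mul_sum, hmeas1, mul_one]
end

section
/- Let d ≥ 1 be an integer, let ε ∈ (0, 1/2), set M = ⌊1/ε⌋, let W ⊆ [0,1]^d, and let K ≥ 0 be a real number. If the number of M-grid cells of [0,1]^d whose intersection with the frontier of W is nonempty is at most K · M^{d−1}, then the Lebesgue measure of the set {x ∈ [0,1]^d : dist(x, frontier W) ≤ ε} (Euclidean distance) is at most 2 · 3^d · K · ε. -/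
open MeasureTheory

/-- The unit cube `[0,1]^d`. -/
def unitCube (d : ℕ) : Set (EuclideanSpace ℝ (Fin d)) :=
  {x | ∀ j, x j ∈ Set.Icc (0 : ℝ) 1}

/-- The `M`-grid cell of `[0,1]^d` with index `k`. -/
def gridCell (d M : ℕ) (k : Fin d → Fin M) : Set (EuclideanSpace ℝ (Fin d)) :=
  {x | ∀ j, x j ∈ Set.Icc ((k j : ℝ) / M) (((k j : ℝ) + 1) / M)}

/-- coordinate distance bound in Euclidean space -/
lemma coord_le_dist {d : ℕ} (x y : EuclideanSpace ℝ (Fin d)) (j : Fin d) :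
    dist (x j) (y j) ≤ dist x y := by
  rw [EuclideanSpace.dist_eq]
  have h1 : dist (x j) (y j) ^ 2 ≤ ∑ i, dist (x i) (y i) ^ 2 :=
    Finset.single_le_sum (f := fun i => dist (x i) (y i) ^ 2)
      (fun i _ => sq_nonneg _) (Finset.mem_univ j)
  calc dist (x j) (y j) = √(dist (x j) (y j) ^ 2) := (Real.sqrt_sq dist_nonneg).symm
    _ ≤ √(∑ i, dist (x i) (y i) ^ 2) := Real.sqrt_le_sqrt h1

/-- every point of [0,1] lies in some grid interval -/
lemma exists_grid_idx {M : ℕ} (hM : 0 < M) {t : ℝ} (ht : t ∈ Set.Icc (0:ℝ) 1) :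
    ∃ n : Fin M, t ∈ Set.Icc ((n : ℝ) / M) (((n : ℝ) + 1) / M) := by
  have hMR : (0:ℝ) < M := by exact_mod_cast hM
  by_cases h : ⌊t * M⌋₊ ≤ M - 1
  · refine ⟨⟨⌊t * M⌋₊, by omega⟩, ?_, ?_⟩
    · simp only []
      rw [div_le_iff₀ hMR]
      exact_mod_cast Nat.floor_le (by nlinarith [ht.1])
    · simp only []
      rw [le_div_iff₀ hMR]
      have := Nat.lt_floor_add_one (t * M)
      linarith
  · refine ⟨⟨M - 1, by omega⟩, ?_, ?_⟩
    · have hfl : (M : ℝ) ≤ ⌊t * M⌋₊ := by exact_mod_cast (by omega : M ≤ ⌊t * M⌋₊)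
      have h2 : (⌊t * M⌋₊ : ℝ) ≤ t * M := Nat.floor_le (by nlinarith [ht.1])
      simp only []
      rw [div_le_iff₀ hMR]
      have : (((M:ℕ) - 1 : ℕ) : ℝ) ≤ M := by
        have : ((M:ℕ) - 1 : ℕ) ≤ M := by omega
        exact_mod_cast this
      nlinarith
    · simp only []
      rw [le_div_iff₀ hMR]
      have : (((M:ℕ) - 1 : ℕ) : ℝ) + 1 = M := by
        have : ((M:ℕ) - 1 : ℕ) + 1 = M := by omega
        exact_mod_cast this
      rw [this]
      nlinarith [ht.2]

/-- Volume bound on the `ε`-neighborhood of the decision boundary: if at most `K·M^{d-1}`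
grid cells (mesh `1/M`, `M = ⌊1/ε⌋`) meet the frontier of `W ⊆ [0,1]^d`, then the Lebesgue
measure of the set of points of `[0,1]^d` within Euclidean distance `ε` of the frontier of
`W` is at most `2·3^d·K·ε`. -/
theorem stmt15 (d : ℕ) (hd : 1 ≤ d) (ε : ℝ) (hε : ε ∈ Set.Ioo (0 : ℝ) (1 / 2))
    (M : ℕ) (hM : M = ⌊1 / ε⌋₊)
    (W : Set (EuclideanSpace ℝ (Fin d))) (hW : W ⊆ unitCube d)
    (K : ℝ) (hK : 0 ≤ K)
    (hcells : (({k : Fin d → Fin M | (gridCell d M k ∩ frontier W).Nonempty}).ncard : ℝ)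
      ≤ K * (M : ℝ) ^ (d - 1)) :
    volume {x ∈ unitCube d | EMetric.infEdist x (frontier W) ≤ ENNReal.ofReal ε}
      ≤ ENNReal.ofReal (2 * 3 ^ d * K * ε) := by
  obtain ⟨hε0, hε2⟩ := hε
  have hM2 : 2 ≤ M := by
    rw [hM]; apply Nat.le_floor
    rw [le_div_iff₀ hε0]; push_cast; linarith
  have hMpos : 0 < M := by omega
  have hMR : (0:ℝ) < M := by exact_mod_cast hMpos
  have hεM : ε ≤ 1 / M := by
    rw [le_div_iff₀ hMR, hM]
    calc ε * (⌊1/ε⌋₊ : ℝ) ≤ ε * (1/ε) :=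
          mul_le_mul_of_nonneg_left (Nat.floor_le (by positivity)) hε0.le
      _ = 1 := by field_simp
  have hMε : 1 / (M:ℝ) ≤ 2 * ε := by
    rw [div_le_iff₀ hMR]
    have h1 : (1:ℝ)/ε < (⌊1/ε⌋₊ : ℝ) + 1 := Nat.lt_floor_add_one _
    rw [← hM] at h1
    rw [div_lt_iff₀ hε0] at h1
    nlinarith
  have hRHS0 : (0:ℝ) ≤ 2 * 3 ^ d * K * ε := by positivity
  by_cases hF : (frontier W).Nonempty
  · -- frontier W ⊆ unitCube
    have hCclosed : IsClosed (unitCube d) := by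
      have : unitCube d = ⋂ j, (fun x : EuclideanSpace ℝ (Fin d) => x j) ⁻¹' Set.Icc 0 1 := by
        ext x; simp [unitCube, Set.mem_iInter]
      rw [this]
      exact isClosed_iInter fun j => isClosed_Icc.preimage (PiLp.continuous_apply 2 _ j)
    have hFsub : frontier W ⊆ unitCube d := by
      intro y hy
      exact hCclosed.closure_subset_iff.mpr hW (hy.1)
    set S : Set (Fin d → Fin M) := {k | (gridCell d M k ∩ frontier W).Nonempty} with hS
    set E : (Fin d → Fin M) → Set (EuclideanSpace ℝ (Fin d)) := fun k =>
      {x | ∀ j, x j ∈ Set.Icc (((k j : ℝ) - 1) / M) (((k j : ℝ) + 2) / M)} with hE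
    have hSfin : S.Finite := Set.toFinite S
    -- covering
    have hcover : {x ∈ unitCube d | EMetric.infEdist x (frontier W) ≤ ENNReal.ofReal ε}
        ⊆ ⋃ k ∈ hSfin.toFinset, E k := by
      rintro x ⟨hx, hxd⟩
      obtain ⟨y, hyF, hyd⟩ := (isClosed_frontier).exists_infDist_eq_dist hF x
      have hdist : dist x y ≤ ε := by
        rw [← hyd]
        have : Metric.infDist x (frontier W) = (EMetric.infEdist x (frontier W)).toReal := rfl
        rw [this]
        exact ENNReal.toReal_le_of_le_ofReal hε0.le hxd
      have hyC := hFsub hyF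
      have hchoice : ∀ j : Fin d, ∃ n : Fin M,
          y j ∈ Set.Icc ((n : ℝ) / M) (((n : ℝ) + 1) / M) :=
        fun j => exists_grid_idx hMpos (hyC j)
      choose k hk using hchoice
      have hkS : k ∈ hSfin.toFinset := by
        rw [Set.Finite.mem_toFinset]
        exact ⟨y, fun j => hk j, hyF⟩
      refine Set.mem_biUnion hkS ?_
      intro j
      have hcj : dist (x j) (y j) ≤ 1 / M := le_trans (le_trans (coord_le_dist x y j) hdist) hεM |>.trans ?_
      · rw [Real.dist_eq, abs_le] at hcj
        constructor
        · have := (hk j).1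
          rw [sub_div]
          linarith
        · have := (hk j).2
          have h2 : ((k j : ℝ) + 2) / M = ((k j : ℝ) + 1) / M + 1 / M := by ring
          rw [h2]
          linarith
      · linarith
    -- volume of each E k
    have hvol : ∀ k, volume (E k) = (ENNReal.ofReal (3 / M)) ^ d := by
      intro k
      have hEeq : E k = (MeasurableEquiv.toLp 2 (Fin d → ℝ)).symm ⁻¹'
          (Set.univ.pi fun j => Set.Icc (((k j : ℝ) - 1) / M) (((k j : ℝ) + 2) / M)) := by
        ext x
        simp only [hE, Set.mem_setOf_eq, Set.mem_preimage, Set.mem_pi, Set.mem_univ,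
          forall_true_left]
        rfl
      rw [hEeq,
        (EuclideanSpace.volume_preserving_symm_measurableEquiv_toLp (Fin d)).measure_preimage
          (MeasurableSet.univ_pi fun j => measurableSet_Icc).nullMeasurableSet,
        volume_pi_pi]
      have : ∀ j : Fin d, volume (Set.Icc (((k j : ℝ) - 1) / M) (((k j : ℝ) + 2) / M))
          = ENNReal.ofReal (3 / M) := by
        intro j
        rw [Real.volume_Icc]
        congr 1
        field_simp
        ring
      simp [this]
    calc volume {x ∈ unitCube d | EMetric.infEdist x (frontier W) ≤ ENNReal.ofReal ε}
        ≤ volume (⋃ k ∈ hSfin.toFinset, E k) := measure_mono hcover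
      _ ≤ ∑ k ∈ hSfin.toFinset, volume (E k) := measure_biUnion_finset_le _ _
      _ = (hSfin.toFinset.card : ENNReal) * (ENNReal.ofReal (3 / M)) ^ d := by
          simp [hvol, Finset.sum_const, nsmul_eq_mul]
      _ ≤ ENNReal.ofReal (2 * 3 ^ d * K * ε) := by
          rw [← ENNReal.ofReal_natCast, ← ENNReal.ofReal_pow (by positivity),
            ← ENNReal.ofReal_mul (by positivity)]
          apply ENNReal.ofReal_le_ofReal
          have hcard : ((hSfin.toFinset.card : ℕ) : ℝ) ≤ K * (M : ℝ) ^ (d - 1) := by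
            rwa [← Set.ncard_eq_toFinset_card S hSfin]
          have hpow : ((3:ℝ) / M) ^ d = 3 ^ d / (M ^ d) := div_pow 3 _ d
          have hMd : (M:ℝ) ^ d = (M:ℝ) ^ (d - 1) * M := by
            rw [← pow_succ]
            congr 1
            omega
          have h1 : (hSfin.toFinset.card : ℝ) * ((3:ℝ)/M) ^ d
              ≤ K * (M : ℝ) ^ (d - 1) * ((3:ℝ)/M) ^ d :=
            mul_le_mul_of_nonneg_right hcard (by positivity)
          have h2 : K * (M : ℝ) ^ (d - 1) * ((3:ℝ)/M) ^ d = 3 ^ d * K * (1 / M) := by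
            rw [hpow, hMd]
            field_simp
          have h3 : (3:ℝ) ^ d * K * (1 / M) ≤ 3 ^ d * K * (2 * ε) := by
            apply mul_le_mul_of_nonneg_left hMε (by positivity)
          calc (hSfin.toFinset.card : ℝ) * ((3:ℝ)/M) ^ d
              ≤ 3 ^ d * K * (2 * ε) := by rw [h2] at h1; linarith
            _ = 2 * 3 ^ d * K * ε := by ring
  · -- frontier W = ∅
    have hFe : frontier W = ∅ := Set.not_nonempty_iff_eq_empty.mp hF
    have : {x ∈ unitCube d | EMetric.infEdist x (frontier W) ≤ ENNReal.ofReal ε} = ∅ := by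
      ext x
      simp [hFe, EMetric.infEdist, Metric.infEDist_empty, top_le_iff, ENNReal.ofReal_ne_top]
    rw [this]
    simp
end

section
/- Let λ > 0, ρ > 0, c ≥ 0, γ, δ, S, S′, V, V′, R, R′ be real numbers satisfying: 0 < δ < V ≤ 1; V′ > 0; 0 ≤ S′ ≤ S − γδ; V′ ≥ V − δ; S/V ≤ c; γ ≥ c + ρ/λ; and |R′ − R| ≤ δρ. Then R′ + λ · (S′/V′) < R + λ · (S/V). -/
/-- Arithmetic core of Step 2 of Proposition 1: under the listed inequalities on surfaces,
volumes, risks and the penalty, the competitor `f'` has strictly smaller SVR-penalized risk. -/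
theorem stmt16 (lam ρ c γ δ S S' V V' R R' : ℝ)
    (hlam : 0 < lam) (hρ : 0 < ρ) (hc : 0 ≤ c)
    (hδ0 : 0 < δ) (hδV : δ < V) (hV1 : V ≤ 1) (hV' : 0 < V')
    (hS'0 : 0 ≤ S') (hS' : S' ≤ S - γ * δ)
    (hV'2 : V' ≥ V - δ) (hSV : S / V ≤ c) (hγ : γ ≥ c + ρ / lam)
    (hR : |R' - R| ≤ δ * ρ) :
    R' + lam * (S' / V') < R + lam * (S / V) := by
  have hVδ : 0 < V - δ := by linarith
  have hV0 : 0 < V := by linarith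
  have hSγ : 0 ≤ S - γ * δ := le_trans hS'0 hS'
  have h1 : S' / V' ≤ (S - γ * δ) / (V - δ) :=
    div_le_div₀ hSγ hS' hVδ (by linarith)
  have hR' : R' ≤ R + δ * ρ := by
    have := abs_le.mp hR; linarith [this.2]
  have hS : S ≤ c * V := (div_le_iff₀ hV0).mp hSV
  have hγ' : c * lam + ρ ≤ γ * lam := by
    have : (c + ρ / lam) * lam ≤ γ * lam :=
      mul_le_mul_of_nonneg_right hγ hlam.le
    calc c * lam + ρ = (c + ρ / lam) * lam := by
          field_simp
      _ ≤ γ * lam := this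
  have key : lam * ((S - γ * δ) / (V - δ)) + δ * ρ < lam * (S / V) := by
    rw [mul_div_assoc', mul_div_assoc', div_add' _ _ _ hVδ.ne',
      div_lt_div_iff₀ hVδ hV0]
    nlinarith [mul_le_mul_of_nonneg_right hγ' (mul_pos hδ0 hV0).le,
      mul_le_mul_of_nonneg_right hS (mul_pos hlam hδ0).le,
      mul_pos (mul_pos hρ hδ0) (mul_pos hV0 (show (0:ℝ) < 1 - V + δ by linarith))]
  have h2 : lam * (S' / V') ≤ lam * ((S - γ * δ) / (V - δ)) :=
    mul_le_mul_of_nonneg_left h1 hlam.le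
  linarith
end

section
/- Let p, p̂, p₁, p̂₁, p₂, p̂₂ ∈ [0,1] and v₁, v₂, v̂₁, v̂₂ ∈ [0,1] with v₁ + v₂ = 1 and v̂₁ + v̂₂ = 1. Then |[2p(1−p) − 2v₁p₁(1−p₁) − 2v₂p₂(1−p₂)] − [2p̂(1−p̂) − 2v̂₁p̂₁(1−p̂₁) − 2v̂₂p̂₂(1−p̂₂)]| ≤ 2|p − p̂| + (1/2)|v₁ − v̂₁| + 2v₁|p₁ − p̂₁| + (1/2)|v₂ − v̂₂| + 2v₂|p₂ − p̂₂|. -/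
private lemma gdiff (a b : ℝ) (ha : a ∈ Set.Icc (0:ℝ) 1) (hb : b ∈ Set.Icc (0:ℝ) 1) :
    |2 * a * (1 - a) - 2 * b * (1 - b)| ≤ 2 * |a - b| := by
  obtain ⟨ha0, ha1⟩ := ha; obtain ⟨hb0, hb1⟩ := hb
  have h : 2 * a * (1 - a) - 2 * b * (1 - b) = (a - b) * (2 - 2*a - 2*b) := by ring
  rw [h, abs_mul]
  have : |2 - 2*a - 2*b| ≤ 2 := by
    rw [abs_le]; constructor <;> nlinarith
  calc |a - b| * |2 - 2*a - 2*b| ≤ |a - b| * 2 := by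
        exact mul_le_mul_of_nonneg_left this (abs_nonneg _)
    _ = 2 * |a - b| := by ring

private lemma wterm (v w a b : ℝ) (hv : v ∈ Set.Icc (0:ℝ) 1) (ha : a ∈ Set.Icc (0:ℝ) 1)
    (hb : b ∈ Set.Icc (0:ℝ) 1) :
    |2 * v * a * (1 - a) - 2 * w * b * (1 - b)| ≤ 2 * v * |a - b| + (1/2) * |v - w| := by
  have h : 2 * v * a * (1 - a) - 2 * w * b * (1 - b)
      = v * (2 * a * (1 - a) - 2 * b * (1 - b)) + (v - w) * (2 * b * (1 - b)) := by ring
  rw [h]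
  refine (abs_add_le _ _).trans ?_
  have h1 : |v * (2 * a * (1 - a) - 2 * b * (1 - b))| ≤ 2 * v * |a - b| := by
    rw [abs_mul, abs_of_nonneg hv.1]
    calc v * |2 * a * (1 - a) - 2 * b * (1 - b)| ≤ v * (2 * |a - b|) :=
          mul_le_mul_of_nonneg_left (gdiff a b ha hb) hv.1
      _ = 2 * v * |a - b| := by ring
  have h2 : |(v - w) * (2 * b * (1 - b))| ≤ (1/2) * |v - w| := by
    rw [abs_mul]
    have hg : |2 * b * (1 - b)| ≤ 1/2 := by
      rw [abs_le]; obtain ⟨hb0, hb1⟩ := hb; constructor <;> nlinarith [sq_nonneg (b - 1/2)]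
    calc |v - w| * |2 * b * (1 - b)| ≤ |v - w| * (1/2) :=
          mul_le_mul_of_nonneg_left hg (abs_nonneg _)
      _ = (1/2) * |v - w| := by ring
  linarith

/-- Perturbation bound (Delta I decompose) for the Gini impurity decrease of a binary split:
comparing the impurity decrease computed from `(p, v₁, v₂, p₁, p₂)` with that computed from
`(p̂, v̂₁, v̂₂, p̂₁, p̂₂)`. -/
theorem stmt17 (p phat p₁ phat₁ p₂ phat₂ v₁ v₂ vhat₁ vhat₂ : ℝ)
    (hp : p ∈ Set.Icc (0 : ℝ) 1) (hphat : phat ∈ Set.Icc (0 : ℝ) 1)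
    (hp₁ : p₁ ∈ Set.Icc (0 : ℝ) 1) (hphat₁ : phat₁ ∈ Set.Icc (0 : ℝ) 1)
    (hp₂ : p₂ ∈ Set.Icc (0 : ℝ) 1) (hphat₂ : phat₂ ∈ Set.Icc (0 : ℝ) 1)
    (hv₁ : v₁ ∈ Set.Icc (0 : ℝ) 1) (hv₂ : v₂ ∈ Set.Icc (0 : ℝ) 1)
    (hvhat₁ : vhat₁ ∈ Set.Icc (0 : ℝ) 1) (hvhat₂ : vhat₂ ∈ Set.Icc (0 : ℝ) 1)
    (hv : v₁ + v₂ = 1) (hvhat : vhat₁ + vhat₂ = 1) :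
    |(2 * p * (1 - p) - 2 * v₁ * p₁ * (1 - p₁) - 2 * v₂ * p₂ * (1 - p₂))
        - (2 * phat * (1 - phat) - 2 * vhat₁ * phat₁ * (1 - phat₁)
            - 2 * vhat₂ * phat₂ * (1 - phat₂))|
      ≤ 2 * |p - phat| + (1 / 2) * |v₁ - vhat₁| + 2 * v₁ * |p₁ - phat₁|
          + (1 / 2) * |v₂ - vhat₂| + 2 * v₂ * |p₂ - phat₂| := by
  have h : (2 * p * (1 - p) - 2 * v₁ * p₁ * (1 - p₁) - 2 * v₂ * p₂ * (1 - p₂))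
        - (2 * phat * (1 - phat) - 2 * vhat₁ * phat₁ * (1 - phat₁)
            - 2 * vhat₂ * phat₂ * (1 - phat₂))
      = (2 * p * (1 - p) - 2 * phat * (1 - phat))
        - (2 * v₁ * p₁ * (1 - p₁) - 2 * vhat₁ * phat₁ * (1 - phat₁))
        - (2 * v₂ * p₂ * (1 - p₂) - 2 * vhat₂ * phat₂ * (1 - phat₂)) := by ring
  rw [h]
  have t1 := gdiff p phat hp hphat
  have t2 := wterm v₁ vhat₁ p₁ phat₁ hv₁ hp₁ hphat₁
  have t3 := wterm v₂ vhat₂ p₂ phat₂ hv₂ hp₂ hphat₂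
  calc |_ - _ - _| ≤ |2 * p * (1 - p) - 2 * phat * (1 - phat)|
        + |2 * v₁ * p₁ * (1 - p₁) - 2 * vhat₁ * phat₁ * (1 - phat₁)|
        + |2 * v₂ * p₂ * (1 - p₂) - 2 * vhat₂ * phat₂ * (1 - phat₂)| := by
        refine (abs_sub _ _).trans ?_
        have := abs_sub (2 * p * (1 - p) - 2 * phat * (1 - phat))
          (2 * v₁ * p₁ * (1 - p₁) - 2 * vhat₁ * phat₁ * (1 - phat₁))
        linarith
    _ ≤ _ := by linarith
end

section
/- Let d ≥ 1 and M ≥ 1 be natural numbers, let 𝒢 be the set of M-grid cells of [0,1]^d, and let W ⊆ [0,1]^d. Let 𝒞 ⊆ 𝒢 be a collection of cells whose union contains W and whose cardinality is minimal among all subcollections of 𝒢 whose union contains W. Then (⋃𝒞) ∖ W ⊆ ⋃{C ∈ 𝒢 : C ∩ (frontier W) ≠ ∅}; that is, the symmetric difference between W and its minimal grid cover is contained in the union of grid cells meeting the topological boundary of W. -/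
lemma gridCell_convex (d M : ℕ) (k : Fin d → Fin M) : Convex ℝ (gridCell d M k) := by
  intro x hx y hy a b ha hb hab j
  have := (convex_Icc ((k j : ℝ) / M) (((k j : ℝ) + 1) / M)) (hx j) (hy j) ha hb hab
  simpa using this

/-- A preconnected set meeting both `W` and its complement meets the frontier of `W`. -/
lemma precon_frontier {α : Type*} [TopologicalSpace α] {C W : Set α}
    (hC : IsPreconnected C) (h1 : (C ∩ W).Nonempty) (h2 : (C \ W).Nonempty) :
    (C ∩ frontier W).Nonempty := by
  by_contra h
  rw [Set.not_nonempty_iff_eq_empty] at h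
  have hsub : C ⊆ interior W ∪ interior Wᶜ := by
    intro x hx
    have hxf : x ∉ frontier W := fun hf => (Set.eq_empty_iff_forall_notMem.mp h x ⟨hx, hf⟩)
    rcases Classical.em (x ∈ closure W) with hcl | hcl
    · left
      by_contra hint
      exact hxf ⟨hcl, hint⟩
    · right
      rw [interior_compl]
      simpa using hcl
  obtain ⟨w, hwC, hwW⟩ := h1
  obtain ⟨z, hzC, hzW⟩ := h2
  have hw : w ∈ interior W := by
    rcases hsub hwC with h' | h'
    · exact h'
    · exact absurd (interior_subset h' : w ∈ Wᶜ) (by simp [hwW])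
  have hz : z ∈ interior Wᶜ := by
    rcases hsub hzC with h' | h'
    · exact absurd (interior_subset h') hzW
    · exact h'
  obtain ⟨y, hy⟩ := hC (interior W) (interior Wᶜ) isOpen_interior isOpen_interior
    hsub ⟨w, hwC, hw⟩ ⟨z, hzC, hz⟩
  exact (interior_subset hy.2.2 : y ∈ Wᶜ) (interior_subset hy.2.1)

/-- First claim in the proof of Lemma 7: the symmetric difference between `W` and a minimal
grid cover of `W` is contained in the union of the grid cells meeting the frontier of `W`. -/
theorem stmt18 (d M : ℕ) (hd : 1 ≤ d) (hM : 1 ≤ M)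
    (W : Set (EuclideanSpace ℝ (Fin d))) (hW : W ⊆ unitCube d)
    (𝒞 : Finset (Fin d → Fin M))
    (hcover : W ⊆ ⋃ k ∈ 𝒞, gridCell d M k)
    (hmin : ∀ 𝒞' : Finset (Fin d → Fin M),
      W ⊆ (⋃ k ∈ 𝒞', gridCell d M k) → 𝒞.card ≤ 𝒞'.card) :
    (⋃ k ∈ 𝒞, gridCell d M k) \ W ⊆
      ⋃ k ∈ {k : Fin d → Fin M | (gridCell d M k ∩ frontier W).Nonempty}, gridCell d M k := by
  rintro x ⟨hxU, hxW⟩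
  simp only [Set.mem_iUnion] at hxU
  obtain ⟨k, hk𝒞, hxk⟩ := hxU
  -- The cell of k meets W, else we could remove it from the cover.
  have hmeet : (gridCell d M k ∩ W).Nonempty := by
    by_contra h
    rw [Set.not_nonempty_iff_eq_empty] at h
    have hcov' : W ⊆ ⋃ k' ∈ 𝒞.erase k, gridCell d M k' := by
      intro w hw
      obtain ⟨k', hk', hwk'⟩ := Set.mem_iUnion₂.mp (hcover hw)
      have hne : k' ≠ k := by
        rintro rfl
        exact Set.eq_empty_iff_forall_notMem.mp h w ⟨hwk', hw⟩
      exact Set.mem_iUnion₂.mpr ⟨k', Finset.mem_erase.mpr ⟨hne, hk'⟩, hwk'⟩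
    have := hmin _ hcov'
    have hlt := Finset.card_erase_lt_of_mem hk𝒞
    omega
  have hfr : (gridCell d M k ∩ frontier W).Nonempty :=
    precon_frontier (gridCell_convex d M k).isPreconnected hmeet ⟨x, hxk, hxW⟩
  exact Set.mem_iUnion₂.mpr ⟨k, hfr, hxk⟩
end
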